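/- In any Dallajascar (φ, H, r) on S, the witness of the precedence relation is unique: for all x, y : S, if the triples (a, x₁, y₁) and (b, x₂, y₂) both satisfy Relation.ReflTransGen P x x_i, Relation.ReflTransGen P y y_i, φ x_i = some of the common parent, φ y_i = some of the common parent, and x_i occurring strictly before y_i in the list H of that parent (with common parent a for the first triple and b for the second), then a = b, x₁ = x₂ and y₁ = y₂. -/

import Mathlib

/-- A *Dallajascar* on a finite nonempty type `S`: a parent function `phi : S → Option S`,
an ordered-children function `H : S → List S`, and a root `r : S`, such that
(i) `phi r = none`; (ii) `phi x ≠ none` for `x ≠ r`; (iii) the transitive closure of the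
parent relation is irreflexive; (iv) `H x` is a duplicate-free list whose members are
exactly the `y` with `phi y = some x`. -/
structure Dallajascar (S : Type*) [Fintype S] [Nonempty S] where
  phi : S → Option S
  H : S → List S
  r : S
  phi_root : phi r = none
  phi_ne_none : ∀ x : S, x ≠ r → phi x ≠ none
  acyclic : ∀ x : S, ¬ Relation.TransGen (fun y z => phi y = some z) x x
  H_nodup : ∀ x : S, (H x).Nodup
  mem_H : ∀ x y : S, y ∈ H x ↔ phi y = some x

namespace Dallajascar

variable {S : Type*} [Fintype S] [Nonempty S]

/-- The parent relation: `P D y x` iff `x` is the parent of `y`. -/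
def P (D : Dallajascar S) (y x : S) : Prop := D.phi y = some x

/-- `Nest D x y` : « x emboîte y », i.e. `x` is a strict ancestor of `y`. -/
def Nest (D : Dallajascar S) (x y : S) : Prop := Relation.TransGen D.P y x

/-- `Prec D x y` : « x précède y » : there are ancestors-or-selves `x'` of `x` and `y'`
of `y` with a common parent `a`, `x'` occurring strictly before `y'` in `H a`. -/
def Prec (D : Dallajascar S) (x y : S) : Prop :=
  ∃ a x' y' : S, Relation.ReflTransGen D.P x x' ∧ Relation.ReflTransGen D.P y y' ∧
    D.phi x' = some a ∧ D.phi y' = some a ∧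
    ∃ i j : ℕ, i < j ∧ (D.H a)[i]? = some x' ∧ (D.H a)[j]? = some y'

/-- The parent relation is right-unique. -/
lemma P_right_unique (D : Dallajascar S) : Relator.RightUnique D.P := by
  intro u v w hv hw
  have := hv.symm.trans hw
  exact Option.some.inj this

/-- Two children of the same node on a common ancestor chain are equal. -/
lemma no_two_children (D : Dallajascar S) {u v c : S}
    (h : Relation.ReflTransGen D.P u v)
    (hu : D.phi u = some c) (hv : D.phi v = some c) : u = v := by
  rcases h.cases_head with rfl | ⟨w, huw, hwv⟩
  · rfl
  · have hwc : w = c := Option.some.inj (huw.symm.trans hu)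
    rw [hwc] at hwv
    exact absurd (Relation.TransGen.tail' hwv hv) (D.acyclic c)

lemma distinct_of_idx (D : Dallajascar S) {c u v : S}
    (h : ∃ i j : ℕ, i < j ∧ (D.H c)[i]? = some u ∧ (D.H c)[j]? = some v) : u ≠ v := by
  rcases h with ⟨i, j, hij, hi, hj⟩
  rintro rfl
  have hlen : i < (D.H c).length := by
    by_contra h'
    rw [List.getElem?_eq_none (Nat.le_of_not_lt h')] at hi
    exact Option.some_ne_none u hi.symm
  have := (List.getElem?_inj hlen (D.H_nodup c)).mp (hi.trans hj.symm)
  omega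

lemma aux (D : Dallajascar S) {a b x₁ x₂ y₁ y₂ : S}
    (hpx₁ : D.phi x₁ = some a) (hpy₁ : D.phi y₁ = some a)
    (hpx₂ : D.phi x₂ = some b) (hpy₂ : D.phi y₂ = some b)
    (hx : Relation.ReflTransGen D.P x₁ x₂)
    (hy : Relation.ReflTransGen D.P y₁ y₂ ∨ Relation.ReflTransGen D.P y₂ y₁)
    (hxy2 : x₂ ≠ y₂) : x₁ = x₂ := by
  rcases hx.cases_head with rfl | ⟨w, hw, hax₂⟩
  · rfl
  · exfalso
    have hwa : w = a := Option.some.inj (hw.symm.trans hpx₁)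
    rw [hwa] at hax₂
    -- ReflTransGen a x₂, so TransGen a b
    have hab : Relation.TransGen D.P a b := Relation.TransGen.tail' hax₂ hpx₂
    rcases hy with hy | hy
    · rcases hy.cases_head with rfl | ⟨w', hw', hay₂⟩
      · -- y₁ = y₂, so a = b
        have : a = b := Option.some.inj (hpy₁.symm.trans hpy₂)
        subst this
        exact D.acyclic a hab
      · have hwa' : w' = a := Option.some.inj (hw'.symm.trans hpy₁)
        rw [hwa'] at hay₂
        -- x₂ and y₂ both children of b reachable from a
        rcases Relation.ReflTransGen.total_of_right_unique (P_right_unique D) hax₂ hay₂ with h | h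
        · exact hxy2 (no_two_children D h hpx₂ hpy₂)
        · exact hxy2 ((no_two_children D h hpy₂ hpx₂).symm)
    · rcases hy.cases_head with rfl | ⟨w', hw', hby₁⟩
      · have : a = b := Option.some.inj (hpy₁.symm.trans hpy₂)
        subst this
        exact D.acyclic a hab
      · have hwb' : w' = b := Option.some.inj (hw'.symm.trans hpy₂)
        rw [hwb'] at hby₁
        have hba : Relation.TransGen D.P b a := Relation.TransGen.tail' hby₁ hpy₁
        exact D.acyclic a (hab.trans hba)

/-- The witness triple `(a, x', y')` of the precedence relation is unique. -/
theorem prec_witness_unique (D : Dallajascar S) (x y : S)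
    (a x₁ y₁ b x₂ y₂ : S)
    (hx₁ : Relation.ReflTransGen D.P x x₁) (hy₁ : Relation.ReflTransGen D.P y y₁)
    (hpx₁ : D.phi x₁ = some a) (hpy₁ : D.phi y₁ = some a)
    (hij₁ : ∃ i j : ℕ, i < j ∧ (D.H a)[i]? = some x₁ ∧ (D.H a)[j]? = some y₁)
    (hx₂ : Relation.ReflTransGen D.P x x₂) (hy₂ : Relation.ReflTransGen D.P y y₂)
    (hpx₂ : D.phi x₂ = some b) (hpy₂ : D.phi y₂ = some b)
    (hij₂ : ∃ i j : ℕ, i < j ∧ (D.H b)[i]? = some x₂ ∧ (D.H b)[j]? = some y₂) :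
    a = b ∧ x₁ = x₂ ∧ y₁ = y₂ := by
  have hne₁ : x₁ ≠ y₁ := distinct_of_idx D hij₁
  have hne₂ : x₂ ≠ y₂ := distinct_of_idx D hij₂
  have hycmp := Relation.ReflTransGen.total_of_right_unique (P_right_unique D) hy₁ hy₂
  have hx12 : x₁ = x₂ := by
    rcases Relation.ReflTransGen.total_of_right_unique (P_right_unique D) hx₁ hx₂ with h | h
    · exact aux D hpx₁ hpy₁ hpx₂ hpy₂ h hycmp hne₂
    · exact (aux D hpx₂ hpy₂ hpx₁ hpy₁ h hycmp.symm hne₁).symm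
  subst hx12
  have hab : a = b := Option.some.inj (hpx₁.symm.trans hpx₂)
  subst hab
  refine ⟨rfl, rfl, ?_⟩
  rcases hycmp with h | h
  · exact no_two_children D h hpy₁ hpy₂
  · exact (no_two_children D h hpy₂ hpy₁).symm

end Dallajascar
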